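/- Let ⊖ be the uniform Kronecker difference given by matrices υ_n (tr(υ_n)=1) via A⊖B = tr₁₂(α_{m,n}ᵀ(A⊗I_m − I_m⊗B⊗I_m)) with α_{m,n} = Σ_{i,j} E_{ij}⊗υ_n⊗E_{ji}. If (X⊖Y)⊖Z = X⊖(Z⊕Y) for all X ∈ F^{mpq×mpq}, Y ∈ F^{q×q}, Z ∈ F^{p×p}, and all m,p,q, then υ_{pq} = υ_p ⊗ υ_q = υ_q ⊗ υ_p for all p,q ∈ ℕ. -/

import Mathlib

open Matrix Kronecker

/-- The Kronecker sum `A ⊕ B = A ⊗ I + I ⊗ B`. -/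
def ksum {F : Type*} [Semiring F] {α β : Type*} [Fintype α] [Fintype β]
    [DecidableEq α] [DecidableEq β]
    (A : Matrix α α F) (B : Matrix β β F) : Matrix (α × β) (α × β) F :=
  A ⊗ₖ (1 : Matrix β β F) + (1 : Matrix α α F) ⊗ₖ B

/-- Partial trace over the first two tensor factors:
`tr12 (A ⊗ B ⊗ C) = tr A * tr B • C`. -/
def tr12 {F : Type*} [AddCommMonoid F] {α β γ : Type*} [Fintype α] [Fintype β]
    (M : Matrix ((α × β) × γ) ((α × β) × γ) F) : Matrix γ γ F :=
  Matrix.of fun c d => ∑ p : α × β, M (p, c) (p, d)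

/-- Partial trace over the first tensor factor: `tr1 (A ⊗ B ⊗ C) = tr A • (B ⊗ C)`. -/
def tr1 {F : Type*} [AddCommMonoid F] {α β γ : Type*} [Fintype α]
    (M : Matrix ((α × β) × γ) ((α × β) × γ) F) : Matrix (β × γ) (β × γ) F :=
  Matrix.of fun p q => ∑ i : α, M ((i, p.1), p.2) ((i, q.1), q.2)

/-- Partial trace over the middle tensor factor: `tr2 (A ⊗ B ⊗ C) = tr B • (A ⊗ C)`. -/
def tr2 {F : Type*} [AddCommMonoid F] {α β γ : Type*} [Fintype β]
    (M : Matrix ((α × β) × γ) ((α × β) × γ) F) : Matrix (α × γ) (α × γ) F :=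
  Matrix.of fun p q => ∑ k : β, M ((p.1, k), p.2) ((q.1, k), q.2)

/-- Partial trace over the third tensor factor: `tr3 (A ⊗ B ⊗ C) = tr C • (A ⊗ B)`. -/
def tr3 {F : Type*} [AddCommMonoid F] {α β γ : Type*} [Fintype γ]
    (M : Matrix ((α × β) × γ) ((α × β) × γ) F) : Matrix (α × β) (α × β) F :=
  Matrix.of fun p q => ∑ c : γ, M (p, c) (q, c)

/-- Partial trace over the second factor of a twofold Kronecker product:
`ptr (B ⊗ C) = tr C • B`. -/
def ptr {F : Type*} [AddCommMonoid F] {α β : Type*} [Fintype β]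
    (M : Matrix (α × β) (α × β) F) : Matrix α α F :=
  Matrix.of fun i j => ∑ k : β, M (i, k) (j, k)

/-- Partial transpose in the third tensor factor: `pT3 (A ⊗ B ⊗ C) = A ⊗ B ⊗ Cᵀ`. -/
def pT3 {F : Type*} {α β γ : Type*}
    (M : Matrix ((α × β) × γ) ((α × β) × γ) F) : Matrix ((α × β) × γ) ((α × β) × γ) F :=
  Matrix.of fun p q => M (p.1, q.2) (q.1, p.2)

/-- Partial transpose in the first two tensor factors:
`pT12 (A ⊗ B ⊗ C) = Aᵀ ⊗ Bᵀ ⊗ C`. -/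
def pT12 {F : Type*} {α β γ : Type*}
    (M : Matrix ((α × β) × γ) ((α × β) × γ) F) : Matrix ((α × β) × γ) ((α × β) × γ) F :=
  Matrix.of fun p q => M (q.1, p.2) (p.1, q.2)

/-- The Kronecker difference generated by the family `υ`. -/
def kdiff {F : Type*} [Field F] (υ : ∀ n : ℕ, Matrix (Fin n) (Fin n) F)
    {α : Type*} [Fintype α] [DecidableEq α] {n : ℕ}
    (A : Matrix (α × Fin n) (α × Fin n) F) (B : Matrix (Fin n) (Fin n) F) :
    Matrix α α F :=
  tr12 ((∑ i : α, ∑ j : α,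
      Matrix.single i j (1 : F) ⊗ₖ υ n ⊗ₖ Matrix.single j i (1 : F))ᵀ *
    (A ⊗ₖ (1 : Matrix α α F) -
      ((1 : Matrix α α F) ⊗ₖ B) ⊗ₖ (1 : Matrix α α F)))


lemma sum_ite_push {ι β : Type*} [Fintype ι] [AddCommMonoid β] (p : Prop) [Decidable p]
    (f : ι → β) : (∑ x : ι, if p then f x else 0) = if p then ∑ x : ι, f x else 0 := by
  split <;> simp

lemma kdiff_apply {F : Type*} [Field F] (υ : ∀ n : ℕ, Matrix (Fin n) (Fin n) F)
    {α : Type*} [Fintype α] [DecidableEq α] {n : ℕ}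
    (A : Matrix (α × Fin n) (α × Fin n) F) (B : Matrix (Fin n) (Fin n) F) (c d : α) :
    kdiff υ A B c d =
      (∑ k : Fin n, ∑ k' : Fin n, υ n k' k * A (c, k') (d, k)) -
      (if c = d then ∑ k : Fin n, ∑ k' : Fin n, υ n k' k * B k' k else 0) := by
  classical
  simp only [kdiff, tr12, Matrix.of_apply, Matrix.mul_apply, Matrix.transpose_apply,
    Matrix.sub_apply, Matrix.kroneckerMap_apply, Matrix.sum_apply, Matrix.one_apply,
    Matrix.single, Fintype.sum_prod_type]
  simp only [ite_and, mul_ite, ite_mul, one_mul, mul_one, zero_mul, mul_zero,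
    Finset.sum_ite_eq, Finset.sum_ite_eq', Finset.mem_univ, if_true, ite_self,
    Finset.sum_sub_distrib, sub_zero]
  conv_lhs =>
    enter [2, x, 2, x1]
    rw [Finset.sum_comm]
    enter [2, x3]
    rw [Finset.sum_comm]
  simp only [ite_and, mul_ite, ite_mul, one_mul, mul_one, zero_mul, mul_zero,
    Finset.sum_ite_eq, Finset.sum_ite_eq', Finset.mem_univ, if_true, ite_self,
    Finset.sum_sub_distrib, sub_zero]
  conv_lhs =>
    rw [Finset.sum_comm]
    enter [2, x1]
    rw [Finset.sum_comm]
  simp only [mul_sub, mul_ite, mul_zero, Finset.sum_sub_distrib, Finset.sum_ite_eq',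
    Finset.mem_univ, if_true]
  by_cases h : c = d <;> simp [h]

theorem stmt12 {F : Type*} [Field F] (υ : ∀ n : ℕ, Matrix (Fin n) (Fin n) F)
    (hυ : ∀ n : ℕ, 0 < n → trace (υ n) = 1)
    (hassoc : ∀ (m p q : ℕ), 0 < m → 0 < p → 0 < q →
      ∀ (X : Matrix ((Fin m × Fin p) × Fin q) ((Fin m × Fin p) × Fin q) F)
        (Y : Matrix (Fin q) (Fin q) F) (Z : Matrix (Fin p) (Fin p) F),
      kdiff υ (kdiff υ X Y) Z =
        kdiff υ (Matrix.reindex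
            ((Equiv.prodAssoc (Fin m) (Fin p) (Fin q)).trans
              ((Equiv.refl (Fin m)).prodCongr finProdFinEquiv))
            ((Equiv.prodAssoc (Fin m) (Fin p) (Fin q)).trans
              ((Equiv.refl (Fin m)).prodCongr finProdFinEquiv)) X)
          (Matrix.reindex finProdFinEquiv finProdFinEquiv (ksum Z Y))) :
    ∀ (p q : ℕ), 0 < p → 0 < q →
      υ (p * q) = Matrix.reindex finProdFinEquiv finProdFinEquiv (υ p ⊗ₖ υ q) ∧
      υ p ⊗ₖ υ q = Matrix.reindex (Equiv.prodComm (Fin q) (Fin p))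
        (Equiv.prodComm (Fin q) (Fin p)) (υ q ⊗ₖ υ p) := by
  intro p q hp hq
  have key : ∀ (a a' : Fin p) (b b' : Fin q),
      υ (p * q) (finProdFinEquiv (a', b')) (finProdFinEquiv (a, b)) = υ p a' a * υ q b' b := by
    intro a a' b b'
    have h := hassoc 1 p q one_pos hp hq
      (Matrix.single (((0 : Fin 1), a'), b') (((0 : Fin 1), a), b) (1 : F)) 0 0
    have h0 := congrFun (congrFun h 0) 0
    simp only [kdiff_apply] at h0
    simp only [Matrix.zero_apply, mul_zero, Finset.sum_const_zero, if_pos rfl, sub_zero,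
      Matrix.reindex_apply, Matrix.submatrix_apply, ksum, Matrix.zero_kronecker,
      Matrix.kronecker_zero, add_zero, Matrix.single, Matrix.of_apply] at h0
    simp only [Equiv.symm_trans_apply, Equiv.prodCongr_symm, Equiv.prodCongr_apply,
      Equiv.refl_symm, Equiv.refl_apply, Equiv.prodAssoc_symm_apply, Prod.map_apply,
      Prod.mk.injEq, eq_self_iff_true, true_and, ite_and, mul_ite, mul_one, mul_zero,
      ite_self, sub_zero, if_true, sum_ite_push, Finset.sum_ite_eq, Finset.sum_ite_eq',
      Finset.mem_univ] at h0
    rw [← Equiv.sum_comp finProdFinEquiv] at h0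
    conv_rhs at h0 => enter [2, y]; rw [← Equiv.sum_comp finProdFinEquiv]
    simp only [Equiv.symm_apply_apply, Fintype.sum_prod_type, sum_ite_push,
      Finset.sum_ite_eq, Finset.sum_ite_eq', Finset.mem_univ, if_true] at h0
    exact h0.symm
  constructor
  · ext K' K
    rw [Matrix.reindex_apply, Matrix.submatrix_apply, Matrix.kroneckerMap_apply]
    have := key (finProdFinEquiv.symm K).1 (finProdFinEquiv.symm K').1
      (finProdFinEquiv.symm K).2 (finProdFinEquiv.symm K').2
    rw [Prod.mk.eta, Prod.mk.eta, Equiv.apply_symm_apply, Equiv.apply_symm_apply] at this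
    exact this
  · ext pp qq
    obtain ⟨a', b'⟩ := pp
    obtain ⟨a, b⟩ := qq
    simp [Matrix.reindex_apply, Matrix.submatrix_apply, Matrix.kroneckerMap_apply, mul_comm]
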